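/- Let F be a field in which the squaring map x ↦ x² is not surjective (an NRC field). Let M be a linear subspace of the n×n matrices over F (n ≥ 2) in which every matrix is triangularizable over F (i.e., similar over F to an upper triangular matrix). If A and B are matrices in M with rank A ≤ 1, rank B ≤ 1, trace A = 0 and trace B = 0, then trace(AB) = 0. -/

import Mathlib

/-- A square matrix is triangularizable over the ground field when it is
similar over that field to an upper triangular matrix. -/
def Matrix.Triangularizable {n : ℕ} {F : Type*} [Field F]
    (M : Matrix (Fin n) (Fin n) F) : Prop :=
  ∃ P : (Matrix (Fin n) (Fin n) F)ˣ,
    ((P : Matrix (Fin n) (Fin n) F) * M * ((P⁻¹ : (Matrix (Fin n) (Fin n) F)ˣ) :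
      Matrix (Fin n) (Fin n) F)).BlockTriangular id

open Matrix Polynomial in
/-- A rank ≤ 1 matrix X satisfies X*Y*X = tr(X*Y) • X. -/
lemma rank_le_one_sandwich {n : ℕ} {F : Type*} [Field F]
    (X : Matrix (Fin n) (Fin n) F) (h : X.rank ≤ 1)
    (Y : Matrix (Fin n) (Fin n) F) :
    X * Y * X = (X * Y).trace • X := by
  classical
  have h1 : Module.finrank F (LinearMap.range X.mulVecLin) ≤ 1 := h
  obtain ⟨w, hw⟩ := finrank_le_one_iff.mp h1
  set u : Fin n → F := (w : Fin n → F) with hu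
  choose c hc using fun j => hw ⟨X.mulVecLin (Pi.single j 1), LinearMap.mem_range_self _ _⟩
  have hX : ∀ i j, X i j = u i * c j := by
    intro i j
    have := congrFun (congrArg Subtype.val (hc j)) i
    simp only [Submodule.coe_smul, Pi.smul_apply, smul_eq_mul, mulVecLin_apply,
      mulVec_single, mul_one, MulOpposite.op_one, one_smul, Matrix.col_apply] at this
    rw [← this]; ring
  ext i j
  simp only [Matrix.mul_apply, Matrix.trace, Matrix.diag, Matrix.smul_apply, smul_eq_mul,
    hX, Finset.sum_mul, Finset.mul_sum]
  exact Finset.sum_congr rfl fun k _ => Finset.sum_congr rfl fun l _ => by ring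

open Matrix in
lemma diag_mul_of_triangular {n : ℕ} {F : Type*} [Field F]
    {D E : Matrix (Fin n) (Fin n) F} (hD : D.BlockTriangular id)
    (hE : E.BlockTriangular id) (i : Fin n) :
    (D * E) i i = D i i * E i i := by
  rw [Matrix.mul_apply]
  apply Finset.sum_eq_single_of_mem i (Finset.mem_univ i)
  intro j _ hj
  rcases lt_or_gt_of_ne hj with hlt | hgt
  · rw [hD (show id j < id i from hlt), zero_mul]
  · rw [hE (show id i < id j from hgt), mul_zero]

open Matrix Polynomial in
lemma nilpotent_of_triangular_diag_zero {n : ℕ} {F : Type*} [Field F]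
    {D : Matrix (Fin n) (Fin n) F} (hD : D.BlockTriangular id)
    (hdiag : ∀ i, D i i = 0) : D ^ n = 0 := by
  classical
  have hct : (charmatrix D).BlockTriangular id := by
    intro i j hij
    rw [charmatrix_apply_ne D i j (Ne.symm (ne_of_lt hij)), hD hij, map_zero, neg_zero]
  have hcp : D.charpoly = X ^ n := by
    rw [Matrix.charpoly, Matrix.det_of_upperTriangular hct]
    have h2 : ∀ i : Fin n, charmatrix D i i = X := by
      intro i
      rw [charmatrix_apply_eq, hdiag, map_zero, sub_zero]
    rw [Finset.prod_congr rfl (fun i _ => h2 i)]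
    simp
  have h := D.aeval_self_charpoly
  rw [hcp, map_pow, aeval_X] at h
  simpa [Fintype.card_fin] using h

theorem stmt_0 {F : Type*} [Field F]
    (hNRC : ¬ Function.Surjective fun x : F => x ^ 2)
    {n : ℕ} (hn : 2 ≤ n)
    (M : Submodule F (Matrix (Fin n) (Fin n) F))
    (hM : ∀ A ∈ M, A.Triangularizable)
    (A B : Matrix (Fin n) (Fin n) F) (hA : A ∈ M) (hB : B ∈ M)
    (hrA : A.rank ≤ 1) (hrB : B.rank ≤ 1)
    (htA : A.trace = 0) (htB : B.trace = 0) :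
    (A * B).trace = 0 := by
  classical
  by_contra ht
  apply hNRC
  intro x
  rcases eq_or_ne x 0 with rfl | hx
  · exact ⟨0, by simp⟩
  set t : F := (A * B).trace with htdef
  set α : F := x / t with hα
  have hαt : α * t = x := div_mul_cancel₀ x ht
  have hAA : A * A = 0 := by
    have := rank_le_one_sandwich A hrA 1
    simpa [htA] using this
  have hBB : B * B = 0 := by
    have := rank_le_one_sandwich B hrB 1
    simpa [htB] using this
  have hABA : A * B * A = t • A := rank_le_one_sandwich A hrA B
  have hBAB : B * A * B = t • B := by
    have := rank_le_one_sandwich B hrB A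
    rwa [Matrix.trace_mul_comm] at this
  have hBAA : B * A * A = 0 := by rw [mul_assoc, hAA, Matrix.mul_zero]
  have hABB : A * B * B = 0 := by rw [mul_assoc, hBB, Matrix.mul_zero]
  set C : Matrix (Fin n) (Fin n) F := A + α • B with hCdef
  have hCM : C ∈ M := M.add_mem hA (M.smul_mem α hB)
  have hC3 : C * C * C = x • C := by
    have hC2 : C * C = α • (A * B) + α • (B * A) := by
      rw [hCdef]
      simp only [add_mul, mul_add, smul_mul_assoc, mul_smul_comm, hAA, hBB, smul_smul,
        smul_zero, zero_add, add_zero]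
      abel
    rw [hC2, hCdef, add_mul, mul_add, mul_add]
    simp only [smul_mul_assoc, mul_smul_comm, smul_smul, ← mul_assoc, hAA, hABA, hBAB,
      Matrix.zero_mul, smul_zero, hBB, hBAA, hABB, zero_add, add_zero]
    rw [smul_add, hαt, show α * α * t = x * α by rw [mul_assoc, hαt, mul_comm], smul_smul,
      mul_comm x α, ← smul_smul]
  obtain ⟨P, hP⟩ := hM C hCM
  set D : Matrix (Fin n) (Fin n) F :=
    (P : Matrix (Fin n) (Fin n) F) * C * ((P⁻¹ : (Matrix (Fin n) (Fin n) F)ˣ) :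
      Matrix (Fin n) (Fin n) F) with hDdef
  have hD3 : D * D * D = x • D := by
    have hconj := Units.conj_pow P C 3
    have hC3' : C ^ 3 = x • C := by rw [pow_succ, pow_succ, pow_one, hC3]
    have hDD : D * D * D = D ^ 3 := by rw [pow_succ, pow_succ, pow_one]
    rw [hDD, hDdef, hconj, hC3', Matrix.mul_smul, Matrix.smul_mul]
  by_cases hdiag : ∃ i, D i i ≠ 0
  · obtain ⟨i, hi⟩ := hdiag
    refine ⟨D i i, ?_⟩
    have h1 : (D * D * D) i i = D i i * D i i * D i i := by
      rw [diag_mul_of_triangular (hP.mul hP) hP i, diag_mul_of_triangular hP hP i]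
    have h2 : (x • D) i i = x * D i i := rfl
    have h3 : D i i * D i i * D i i = x * D i i := by rw [← h1, hD3, h2]
    have h4 : D i i * D i i = x := mul_right_cancel₀ hi h3
    simpa [pow_two] using h4
  · push_neg at hdiag
    have hDn : D ^ n = 0 := nilpotent_of_triangular_diag_zero hP hdiag
    have hDpow : ∀ k : ℕ, D ^ (2 * k + 1) = x ^ k • D := by
      intro k
      induction k with
      | zero => simp
      | succ k ih =>
        have h5 : 2 * (k + 1) + 1 = (2 * k + 1) + 2 := by ring
        rw [h5, pow_add, ih, pow_two, Matrix.smul_mul, ← mul_assoc, hD3, smul_smul,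
          pow_succ, mul_comm (x ^ k) x, mul_comm x (x ^ k)]
    have hD0 : D = 0 := by
      have h1 : D ^ (2 * n + 1) = 0 := by
        have h6 : 2 * n + 1 = n + (n + 1) := by ring
        rw [h6, pow_add, hDn, Matrix.zero_mul]
      rw [hDpow n] at h1
      rcases smul_eq_zero.mp h1 with h | h
      · exact absurd h (pow_ne_zero n hx)
      · exact h
    have hC0 : C = 0 := by
      have h7 : ((P⁻¹ : (Matrix (Fin n) (Fin n) F)ˣ) : Matrix (Fin n) (Fin n) F) * D *
          (P : Matrix (Fin n) (Fin n) F) = C := by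
        rw [hDdef, mul_assoc, Units.inv_mul_cancel_right, Units.inv_mul_cancel_left]
      rw [← h7, hD0, Matrix.mul_zero, Matrix.zero_mul]
    have hA' : A = -(α • B) := by
      have h8 := hC0
      rw [hCdef] at h8
      linear_combination (norm := abel) h8
    have ht0 : t = 0 := by
      rw [htdef, hA', Matrix.neg_mul, Matrix.smul_mul, hBB]
      simp
    exact (ht ht0).elim
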